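/- For any vector ψ ∈ ℂ²⊗ℂ² there exist a unitary operator U on ℂ² and real numbers α, β, γ, δ such that (U⊗U)ψ = (α+iβ)|0,1⟩ + (α+iγ)|1,0⟩ + δ|1,1⟩. -/

import Mathlib

open scoped BigOperators
open Matrix

noncomputable section

/-- A unit vector killing a binary quadratic form over ℂ. -/
lemma quad_root (p Q s : ℂ) :
    ∃ a b : ℂ, a * (starRingEnd ℂ) a + b * (starRingEnd ℂ) b = 1 ∧
      p * a ^ 2 + Q * (a * b) + s * b ^ 2 = 0 := by
  obtain ⟨a0, b0, hne, h0⟩ : ∃ a0 b0 : ℂ, (a0 ≠ 0 ∨ b0 ≠ 0) ∧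
      p * a0 ^ 2 + Q * (a0 * b0) + s * b0 ^ 2 = 0 := by
    by_cases hp : p = 0
    · exact ⟨1, 0, Or.inl one_ne_zero, by simp [hp]⟩
    · obtain ⟨w, hw⟩ := IsAlgClosed.exists_pow_nat_eq (Q ^ 2 - 4 * p * s) (n := 2) (by norm_num)
      refine ⟨w - Q, 2 * p, Or.inr (mul_ne_zero two_ne_zero hp), ?_⟩
      linear_combination p * hw
  have hpos : 0 < Complex.normSq a0 + Complex.normSq b0 := by
    rcases hne with h | h
    · have h1 := Complex.normSq_pos.mpr h
      have h2 := Complex.normSq_nonneg b0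
      linarith
    · have h1 := Complex.normSq_pos.mpr h
      have h2 := Complex.normSq_nonneg a0
      linarith
  set n : ℝ := Real.sqrt (Complex.normSq a0 + Complex.normSq b0) with hn
  have hn2 : n ^ 2 = Complex.normSq a0 + Complex.normSq b0 := Real.sq_sqrt hpos.le
  have hnpos : 0 < n := Real.sqrt_pos.mpr hpos
  have hnC : (n : ℂ) ≠ 0 := by exact_mod_cast hnpos.ne'
  refine ⟨a0 / n, b0 / n, ?_, ?_⟩
  · rw [map_div₀, map_div₀, Complex.conj_ofReal]
    rw [div_mul_div_comm, div_mul_div_comm, Complex.mul_conj, Complex.mul_conj]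
    rw [← add_div, div_eq_one_iff_eq (mul_ne_zero hnC hnC)]
    norm_cast
    rw [← hn2]; ring
  · have key : p * (a0 / n) ^ 2 + Q * ((a0 / n) * (b0 / n)) + s * (b0 / n) ^ 2
        = (p * a0 ^ 2 + Q * (a0 * b0) + s * b0 ^ 2) / ((n : ℂ) ^ 2) := by ring
    rw [key, h0, zero_div]

/-- Phase making a complex number equal to its absolute value. -/
lemma phase_real (c : ℂ) :
    ∃ t : ℂ, t * (starRingEnd ℂ) t = 1 ∧ t ^ 2 * c = (‖c‖ : ℂ) := by
  refine ⟨Complex.exp ((-(c.arg / 2) : ℝ) * Complex.I), ?_, ?_⟩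
  · rw [Complex.mul_conj]
    norm_cast
    rw [Complex.normSq_eq_norm_sq, Complex.norm_exp_ofReal_mul_I]
    norm_num
  · have ht2 : (Complex.exp ((-(c.arg / 2) : ℝ) * Complex.I)) ^ 2
        = Complex.exp ((-c.arg : ℝ) * Complex.I) := by
      rw [sq, ← Complex.exp_add]
      congr 1
      push_cast
      ring
    rw [ht2]
    nth_rewrite 2 [← Complex.norm_mul_exp_arg_mul_I c]
    rw [mul_left_comm, ← Complex.exp_add]
    have h0 : ((-c.arg : ℝ) * Complex.I + (c.arg : ℝ) * Complex.I : ℂ) = 0 := by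
      push_cast; ring
    rw [h0, Complex.exp_zero, mul_one]

/-- Phase making a complex number purely imaginary. -/
lemma phase_imag (d : ℂ) :
    ∃ m : ℂ, m * (starRingEnd ℂ) m = 1 ∧ m * d = (‖d‖ : ℂ) * Complex.I := by
  refine ⟨Complex.exp ((Real.pi / 2 - d.arg : ℝ) * Complex.I), ?_, ?_⟩
  · rw [Complex.mul_conj]
    norm_cast
    rw [Complex.normSq_eq_norm_sq, Complex.norm_exp_ofReal_mul_I]
    norm_num
  · nth_rewrite 2 [← Complex.norm_mul_exp_arg_mul_I d]
    rw [mul_left_comm, ← Complex.exp_add]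
    have h1 : ((Real.pi / 2 - d.arg : ℝ) * Complex.I + (d.arg : ℝ) * Complex.I : ℂ)
        = ((Real.pi / 2 : ℝ) : ℂ) * Complex.I := by push_cast; ring
    rw [h1]
    have h2 : Complex.exp (((Real.pi / 2 : ℝ) : ℂ) * Complex.I) = Complex.I := by
      rw [Complex.exp_mul_I]
      simp [← Complex.ofReal_cos, ← Complex.ofReal_sin, Real.cos_pi_div_two,
        Real.sin_pi_div_two]
    rw [h2]

/-- A 2×2 matrix with rows `e1 • (a,b)` and `e2 • (-conj b, conj a)` is unitary. -/
lemma row_unitary (a b e1 e2 : ℂ)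
    (hab : a * (starRingEnd ℂ) a + b * (starRingEnd ℂ) b = 1)
    (he1 : e1 * (starRingEnd ℂ) e1 = 1) (he2 : e2 * (starRingEnd ℂ) e2 = 1) :
    Matrix.of ![![e1 * a, e1 * b], ![-(e2 * (starRingEnd ℂ) b), e2 * (starRingEnd ℂ) a]]
      ∈ Matrix.unitaryGroup (Fin 2) ℂ := by
  rw [Matrix.mem_unitaryGroup_iff]
  ext i j
  fin_cases i <;> fin_cases j <;>
    simp only [Matrix.mul_apply, Fin.sum_univ_two, Matrix.star_apply, Matrix.of_apply,
      Matrix.cons_val', Matrix.cons_val_zero, Matrix.cons_val_one, Matrix.head_cons,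
      Matrix.empty_val', Matrix.cons_val_fin_one, Matrix.head_fin_const, Matrix.one_apply,
      star_neg, star_mul', Complex.star_def, Complex.conj_conj, _root_.map_mul, map_neg,
      Fin.mk_zero, Fin.mk_one,
      if_true, reduceIte, ne_eq, one_ne_zero, zero_ne_one, not_false_eq_true, if_false]
  · linear_combination he1 + e1 * (starRingEnd ℂ) e1 * hab
  · ring
  · ring
  · linear_combination he2 + e2 * (starRingEnd ℂ) e2 * hab

/-- **Canonical form.** For any two-qubit vector `ψ` there is a single-qubit unitary `U` and
real numbers `α, β, γ, δ` such that
`(U⊗U)ψ = (α+iβ)|0,1⟩ + (α+iγ)|1,0⟩ + δ|1,1⟩`. -/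
theorem canonical_form (ψ : Fin 2 × Fin 2 → ℂ) :
    ∃ U : Matrix (Fin 2) (Fin 2) ℂ, U ∈ Matrix.unitaryGroup (Fin 2) ℂ ∧
      ∃ α β γ δ : ℝ,
        (∑ q : Fin 2 × Fin 2, U 0 q.1 * U 0 q.2 * ψ q) = 0 ∧
        (∑ q : Fin 2 × Fin 2, U 0 q.1 * U 1 q.2 * ψ q) = (α : ℂ) + (β : ℂ) * Complex.I ∧
        (∑ q : Fin 2 × Fin 2, U 1 q.1 * U 0 q.2 * ψ q) = (α : ℂ) + (γ : ℂ) * Complex.I ∧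
        (∑ q : Fin 2 × Fin 2, U 1 q.1 * U 1 q.2 * ψ q) = (δ : ℂ) := by
  have expand : ∀ (U : Matrix (Fin 2) (Fin 2) ℂ) (i j : Fin 2),
      (∑ q : Fin 2 × Fin 2, U i q.1 * U j q.2 * ψ q)
        = U i 0 * U j 0 * ψ (0, 0) + U i 0 * U j 1 * ψ (0, 1)
          + U i 1 * U j 0 * ψ (1, 0) + U i 1 * U j 1 * ψ (1, 1) := by
    intro U i j
    rw [Fintype.sum_prod_type]
    simp only [Fin.sum_univ_two]
    norm_num
    ring
  simp only [expand]
  generalize ψ (0, 0) = p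
  generalize ψ (0, 1) = q
  generalize ψ (1, 0) = r
  generalize ψ (1, 1) = s
  obtain ⟨a, b, hab, h0⟩ := quad_root p (q + r) s
  obtain ⟨t, ht1, ht2⟩ := phase_real
    ((starRingEnd ℂ) b * (starRingEnd ℂ) b * p - (starRingEnd ℂ) b * (starRingEnd ℂ) a * q
      - (starRingEnd ℂ) a * (starRingEnd ℂ) b * r + (starRingEnd ℂ) a * (starRingEnd ℂ) a * s)
  obtain ⟨m, hm1, hm2⟩ := phase_imag
    ((-(a * (starRingEnd ℂ) b) * p + a * (starRingEnd ℂ) a * q - b * (starRingEnd ℂ) b * r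
        + b * (starRingEnd ℂ) a * s)
      - (-((starRingEnd ℂ) b * a) * p - (starRingEnd ℂ) b * b * q + (starRingEnd ℂ) a * a * r
        + (starRingEnd ℂ) a * b * s))
  have he1 : (m * (starRingEnd ℂ) t) * (starRingEnd ℂ) (m * (starRingEnd ℂ) t) = 1 := by
    rw [_root_.map_mul, Complex.conj_conj]
    linear_combination (t * (starRingEnd ℂ) t) * hm1 + ht1
  have he12 : m * (starRingEnd ℂ) t * t = m := by linear_combination m * ht1
  have hsub : m * (-(a * (starRingEnd ℂ) b) * p + a * (starRingEnd ℂ) a * q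
        - b * (starRingEnd ℂ) b * r + b * (starRingEnd ℂ) a * s)
      - m * (-((starRingEnd ℂ) b * a) * p - (starRingEnd ℂ) b * b * q
        + (starRingEnd ℂ) a * a * r + (starRingEnd ℂ) a * b * s)
      = (‖((-(a * (starRingEnd ℂ) b) * p + a * (starRingEnd ℂ) a * q
          - b * (starRingEnd ℂ) b * r + b * (starRingEnd ℂ) a * s)
        - (-((starRingEnd ℂ) b * a) * p - (starRingEnd ℂ) b * b * q
          + (starRingEnd ℂ) a * a * r + (starRingEnd ℂ) a * b * s))‖ : ℂ) * Complex.I := by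
    linear_combination hm2
  have hre2 : (m * (-((starRingEnd ℂ) b * a) * p - (starRingEnd ℂ) b * b * q
        + (starRingEnd ℂ) a * a * r + (starRingEnd ℂ) a * b * s)).re
      = (m * (-(a * (starRingEnd ℂ) b) * p + a * (starRingEnd ℂ) a * q
        - b * (starRingEnd ℂ) b * r + b * (starRingEnd ℂ) a * s)).re := by
    have h : (m * (-(a * (starRingEnd ℂ) b) * p + a * (starRingEnd ℂ) a * q
          - b * (starRingEnd ℂ) b * r + b * (starRingEnd ℂ) a * s)).re
        - (m * (-((starRingEnd ℂ) b * a) * p - (starRingEnd ℂ) b * b * q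
          + (starRingEnd ℂ) a * a * r + (starRingEnd ℂ) a * b * s)).re = 0 := by
      rw [← Complex.sub_re, hsub]
      simp
    linarith
  refine ⟨Matrix.of ![![m * (starRingEnd ℂ) t * a, m * (starRingEnd ℂ) t * b],
      ![-(t * (starRingEnd ℂ) b), t * (starRingEnd ℂ) a]],
    row_unitary a b (m * (starRingEnd ℂ) t) t hab he1 ht1,
    (m * (-(a * (starRingEnd ℂ) b) * p + a * (starRingEnd ℂ) a * q
      - b * (starRingEnd ℂ) b * r + b * (starRingEnd ℂ) a * s)).re,
    (m * (-(a * (starRingEnd ℂ) b) * p + a * (starRingEnd ℂ) a * q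
      - b * (starRingEnd ℂ) b * r + b * (starRingEnd ℂ) a * s)).im,
    (m * (-((starRingEnd ℂ) b * a) * p - (starRingEnd ℂ) b * b * q
      + (starRingEnd ℂ) a * a * r + (starRingEnd ℂ) a * b * s)).im,
    ‖((starRingEnd ℂ) b * (starRingEnd ℂ) b * p
      - (starRingEnd ℂ) b * (starRingEnd ℂ) a * q
      - (starRingEnd ℂ) a * (starRingEnd ℂ) b * r + (starRingEnd ℂ) a * (starRingEnd ℂ) a * s)‖,
    ?_, ?_, ?_, ?_⟩ <;>
  simp only [Matrix.of_apply, Matrix.cons_val', Matrix.cons_val_zero, Matrix.cons_val_one,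
    Matrix.head_cons, Matrix.empty_val', Matrix.cons_val_fin_one, Matrix.head_fin_const]
  · linear_combination (m * (starRingEnd ℂ) t) ^ 2 * h0
  · linear_combination (-(a * (starRingEnd ℂ) b) * p + a * (starRingEnd ℂ) a * q
        - b * (starRingEnd ℂ) b * r + b * (starRingEnd ℂ) a * s) * he12
      - Complex.re_add_im (m * (-(a * (starRingEnd ℂ) b) * p + a * (starRingEnd ℂ) a * q
        - b * (starRingEnd ℂ) b * r + b * (starRingEnd ℂ) a * s))
  · linear_combination (-((starRingEnd ℂ) b * a) * p - (starRingEnd ℂ) b * b * q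
        + (starRingEnd ℂ) a * a * r + (starRingEnd ℂ) a * b * s) * he12
      - Complex.re_add_im (m * (-((starRingEnd ℂ) b * a) * p - (starRingEnd ℂ) b * b * q
        + (starRingEnd ℂ) a * a * r + (starRingEnd ℂ) a * b * s))
      + congrArg (fun x : ℝ => (x : ℂ)) hre2
  · linear_combination ht2
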